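/- Let K be a commutative ring, D a K-bialgebra with coproduct Δ_D and counit ε_D, and E a K-coalgebra with coproduct Δ_E and counit ε_E that is also a right D-module with K-bilinear action ⋆. Make E ⊗ E a right module over the K-algebra D ⊗ D componentwise: (x ⊗ y) ⋆ (d ⊗ d′) = (x ⋆ d) ⊗ (y ⋆ d′). Assume the module-coalgebra condition Δ_E(e ⋆ d) = Δ_E(e) ⋆ Δ_D(d) for all e ∈ E, d ∈ D, and that f : E → D is both a morphism of K-coalgebras ((f ⊗ f) ∘ Δ_E = Δ_D ∘ f and ε_D ∘ f = ε_E) and a morphism of right D-modules (f(e ⋆ d) = f(e)·d). Then the coproduct Δ_E is multiplicative for the product e · e′ := e ⋆ f(e′): for all e, e′ ∈ E, Δ_E(e · e′) = Δ_E(e) · Δ_E(e′), where the product on E ⊗ E is defined componentwise by (x ⊗ y)·(x′ ⊗ y′) = (x · x′) ⊗ (y · y′). -/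

import Mathlib

open TensorProduct

/-- The componentwise extension of two bilinear maps to tensor products:
`pairMap g g' (a ⊗ a') (b ⊗ b') = (g a b) ⊗ (g' a' b')`. -/
noncomputable def pairMap {K : Type*} [CommRing K]
    {A A' B B' C C' : Type*}
    [AddCommGroup A] [Module K A] [AddCommGroup A'] [Module K A']
    [AddCommGroup B] [Module K B] [AddCommGroup B'] [Module K B']
    [AddCommGroup C] [Module K C] [AddCommGroup C'] [Module K C']
    (g : A →ₗ[K] B →ₗ[K] C) (g' : A' →ₗ[K] B' →ₗ[K] C') :
    A ⊗[K] A' →ₗ[K] B ⊗[K] B' →ₗ[K] C ⊗[K] C' :=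
  TensorProduct.lift (((TensorProduct.mapBilinear (σ₁₂ := RingHom.id K) (M := B) (N := B') (M₂ := C) (N₂ := C')).comp g).compl₂ g')


lemma pairMap_tmul {K : Type*} [CommRing K]
    {A A' B B' C C' : Type*}
    [AddCommGroup A] [Module K A] [AddCommGroup A'] [Module K A']
    [AddCommGroup B] [Module K B] [AddCommGroup B'] [Module K B']
    [AddCommGroup C] [Module K C] [AddCommGroup C'] [Module K C']
    (g : A →ₗ[K] B →ₗ[K] C) (g' : A' →ₗ[K] B' →ₗ[K] C')
    (a : A) (a' : A') (b : B) (b' : B') :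
    pairMap g g' (a ⊗ₜ a') (b ⊗ₜ b') = g a b ⊗ₜ g' a' b' := by
  simp [pairMap]

lemma pairMap_compl₂ {K : Type*} [CommRing K]
    {A A' B B' C C' B₀ B₀' : Type*}
    [AddCommGroup A] [Module K A] [AddCommGroup A'] [Module K A']
    [AddCommGroup B] [Module K B] [AddCommGroup B'] [Module K B']
    [AddCommGroup C] [Module K C] [AddCommGroup C'] [Module K C']
    [AddCommGroup B₀] [Module K B₀] [AddCommGroup B₀'] [Module K B₀']
    (g : A →ₗ[K] B →ₗ[K] C) (g' : A' →ₗ[K] B' →ₗ[K] C')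
    (f : B₀ →ₗ[K] B) (f' : B₀' →ₗ[K] B')
    (x : A ⊗[K] A') (y : B₀ ⊗[K] B₀') :
    pairMap g g' x (TensorProduct.map f f' y) =
      pairMap (g.compl₂ f) (g'.compl₂ f') x y := by
  induction x using TensorProduct.induction_on with
  | zero => simp
  | tmul a a' =>
    induction y using TensorProduct.induction_on with
    | zero => simp
    | tmul b b' => simp [pairMap_tmul]
    | add y₁ y₂ h₁ h₂ => simp [h₁, h₂]
  | add x₁ x₂ h₁ h₂ => simp [h₁, h₂]

/-- if `E` is a right `D`-module coalgebra over a bialgebra `D`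
(`Δ_E (e ⋆ d) = Δ_E e ⋆ Δ_D d` componentwise) and `f : E → D` is a morphism of coalgebras
and of right `D`-modules, then the coproduct `Δ_E` is multiplicative for the product
`e · e' := e ⋆ f e'`, where `E ⊗ E` is given the componentwise product. -/
theorem comul_multiplicative_for_connection_product
    {K D E : Type*} [CommRing K] [Ring D] [Bialgebra K D]
    [AddCommGroup E] [Module K E] [Coalgebra K E]
    (star : E →ₗ[K] D →ₗ[K] E)
    (hstar_mul : ∀ (e : E) (d d' : D), star e (d * d') = star (star e d) d')
    (hstar_one : ∀ e : E, star e 1 = e)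
    (hmodcoalg : ∀ (e : E) (d : D),
      Coalgebra.comul (R := K) (star e d) =
        pairMap star star (Coalgebra.comul (R := K) e) (Coalgebra.comul (R := K) d))
    (f : E →ₗ[K] D)
    (hf_comul : TensorProduct.map f f ∘ₗ Coalgebra.comul (R := K) (A := E) =
        Coalgebra.comul (R := K) (A := D) ∘ₗ f)
    (hf_counit : Coalgebra.counit (R := K) (A := D) ∘ₗ f =
        Coalgebra.counit (R := K) (A := E))
    (hf_mod : ∀ (e : E) (d : D), f (star e d) = f e * d) :
    ∀ e e' : E,
      Coalgebra.comul (R := K) (star e (f e')) =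
        pairMap (star.compl₂ f) (star.compl₂ f)
          (Coalgebra.comul (R := K) e) (Coalgebra.comul (R := K) e') := by
  intro e e'
  have h : Coalgebra.comul (R := K) (f e') =
      TensorProduct.map f f (Coalgebra.comul (R := K) e') :=
    (LinearMap.congr_fun hf_comul e').symm
  rw [hmodcoalg, h, pairMap_compl₂]
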